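/- Let q ≥ 1. The map B restricted to the open unit cube (−1,1)^q is a bijection onto the invertible region D_θ. -/

import Mathlib

/-- Forward recursion for the Barndorff-Nielsen–Schou / Monahan transformation:
`fwdRow ζ k i = θ_{i,k}` (1-based), with `θ_{k,k} = ζ_k` and
`θ_{i,k} = θ_{i,k-1} - ζ_k * θ_{k-i,k-1}` for `1 ≤ i ≤ k-1`. -/
noncomputable def fwdRow (ζ : ℕ → ℝ) : ℕ → ℕ → ℝ
  | 0 => fun _ => 0
  | (k+1) => fun i =>
      if i = k + 1 then ζ (k + 1)
      else fwdRow ζ k i - ζ (k + 1) * fwdRow ζ k (k + 1 - i)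

open Classical in
/-- Reverse recursion: `(invAux q θ d).1` is row `q - d` (i.e. `θ_{·, q-d}`), and
`(invAux q θ d).2` is the proposition that `|θ_{j,j}| < 1` for all `j` with `q - d ≤ j ≤ q`.
Row `q-(d+1)` is given by `θ_{i,k-1} = (θ_{i,k} + θ_{k,k} θ_{k-i,k})/(1-θ_{k,k}^2)` with
`k = q - d` when the diagonal condition holds at all levels `≥ k`, and is `0` otherwise. -/
noncomputable def invAux (q : ℕ) (θ : ℕ → ℝ) : ℕ → (ℕ → ℝ) × Prop
  | 0 => (θ, |θ q| < 1)
  | (d+1) =>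
      let p := invAux q θ d
      let row : ℕ → ℝ := fun i =>
        if p.2 then (p.1 i + p.1 (q - d) * p.1 (q - d - i)) / (1 - (p.1 (q - d)) ^ 2)
        else 0
      (row, p.2 ∧ |row (q - d - 1)| < 1)

/-- Interpret a vector in `ℝ^q` as a 1-based sequence `ℕ → ℝ` (value `0` out of range). -/
def toSeq {q : ℕ} (v : Fin q → ℝ) : ℕ → ℝ :=
  fun n => if h : n - 1 < q then v ⟨n - 1, h⟩ else 0

/-- The map `B : ℝ^q → ℝ^q`, `B(ζ)_i = θ_{i,q}`. -/
noncomputable def Bmap {q : ℕ} (ζ : Fin q → ℝ) : Fin q → ℝ :=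
  fun i => fwdRow (toSeq ζ) q (i.1 + 1)

/-- The map `B⁻ : ℝ^q → ℝ^q`, `B⁻(θ)_i = θ_{i,i}` computed by the reverse recursion. -/
noncomputable def Binv {q : ℕ} (θ : Fin q → ℝ) : Fin q → ℝ :=
  fun i => (invAux q (toSeq θ) (q - (i.1 + 1))).1 (i.1 + 1)

/-- The invertible region `D_θ ⊆ ℝ^q`: all complex roots of
`θ(z) = 1 - θ_1 z - ⋯ - θ_q z^q` satisfy `|z| > 1`. -/
def invRegion (q : ℕ) : Set (Fin q → ℝ) :=
  {θ | ∀ z : ℂ, 1 - ∑ i : Fin q, (θ i : ℂ) * z ^ (i.1 + 1) = 0 → 1 < ‖z‖}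

/-- The open unit cube `D_ζ = (-1,1)^q ⊆ ℝ^q`. -/
def openCube (q : ℕ) : Set (Fin q → ℝ) :=
  {ζ | ∀ i, ζ i ∈ Set.Ioo (-1 : ℝ) 1}


noncomputable def Epoly (a : ℕ → ℝ) (k : ℕ) (z : ℂ) : ℂ :=
  1 - ∑ i ∈ Finset.range k, (a (i+1) : ℂ) * z^(i+1)

noncomputable def Rpoly (a : ℕ → ℝ) (k : ℕ) (z : ℂ) : ℂ :=
  z^k - ∑ i ∈ Finset.range k, (a (i+1) : ℂ) * z^(k-(i+1))

lemma Epoly_congr {a b : ℕ → ℝ} {k : ℕ} (h : ∀ i, 1 ≤ i → i ≤ k → a i = b i) (z : ℂ) :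
    Epoly a k z = Epoly b k z := by
  unfold Epoly
  congr 1
  refine Finset.sum_congr rfl fun i hi => ?_
  rw [h (i+1) (by omega) (by simpa using Finset.mem_range.mp hi)]

lemma Epoly_zero (a : ℕ → ℝ) (k : ℕ) : Epoly a k 0 = 1 := by
  simp [Epoly]

lemma Rpoly_zero (a : ℕ → ℝ) {k : ℕ} (hk : 1 ≤ k) : Rpoly a k 0 = -(a k) := by
  unfold Rpoly
  rw [zero_pow (by omega)]
  rw [Finset.sum_eq_single (k-1)]
  · simp [Nat.sub_add_cancel hk]
  · intro i hi hne
    rw [zero_pow (by simp at hi; omega)]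
    ring
  · intro h
    simp at h
    omega

lemma differentiable_Epoly (a : ℕ → ℝ) (k : ℕ) : Differentiable ℂ (Epoly a k) := by
  unfold Epoly
  apply Differentiable.sub (differentiable_const _)
  exact Differentiable.fun_sum fun i _ => (differentiable_pow _).const_mul _

lemma differentiable_Rpoly (a : ℕ → ℝ) (k : ℕ) : Differentiable ℂ (Rpoly a k) := by
  unfold Rpoly
  apply Differentiable.sub (differentiable_pow _)
  exact Differentiable.fun_sum fun i _ => (differentiable_pow _).const_mul _

lemma norm_Rpoly_eq (a : ℕ → ℝ) (k : ℕ) {z : ℂ} (hz : ‖z‖ = 1) :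
    ‖Rpoly a k z‖ = ‖Epoly a k z‖ := by
  have hz0 : z ≠ 0 := by intro h; rw [h] at hz; simp at hz
  have key : Rpoly a k z = z^k * (starRingEnd ℂ) (Epoly a k z) := by
    unfold Epoly Rpoly
    rw [map_sub, map_one, map_sum, mul_sub, mul_one]
    congr 1
    rw [Finset.mul_sum]
    refine Finset.sum_congr rfl fun i hi => ?_
    have hik : i + 1 ≤ k := Finset.mem_range.mp hi
    have hconj : (starRingEnd ℂ) ((a (i+1) : ℂ) * z^(i+1)) =
        (a (i+1) : ℂ) * ((starRingEnd ℂ) z)^(i+1) := by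
      rw [map_mul, map_pow, Complex.conj_ofReal]
    rw [hconj]
    have hinv : (starRingEnd ℂ) z = z⁻¹ := by
      rw [Complex.inv_def]
      simp [Complex.normSq_eq_norm_sq, hz]
    rw [hinv, inv_pow, ← mul_assoc, mul_comm (z^k), mul_assoc, pow_sub₀ _ hz0 hik]
  rw [key, norm_mul, norm_pow, hz, one_pow, one_mul]; exact (RCLike.norm_conj _)

lemma Epoly_step {a b : ℕ → ℝ} {s : ℝ} {k : ℕ}
    (hb : ∀ i, 1 ≤ i → i ≤ k → b i = a i - s * a (k+1-i)) (hbk : b (k+1) = s) (z : ℂ) :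
    Epoly b (k+1) z = Epoly a k z - s * z * Rpoly a k z := by
  unfold Epoly Rpoly
  rw [Finset.sum_range_succ, hbk]
  have hsum : ∑ i ∈ Finset.range k, (b (i+1) : ℂ) * z^(i+1)
      = ∑ i ∈ Finset.range k, ((a (i+1) : ℂ) - s * a (k-i)) * z^(i+1) := by
    refine Finset.sum_congr rfl fun i hi => ?_
    have hik : i < k := Finset.mem_range.mp hi
    rw [hb (i+1) (by omega) (by omega)]
    have : k + 1 - (i+1) = k - i := by omega
    rw [this]
    push_cast
    ring
  rw [hsum]
  have hrefl : ∑ i ∈ Finset.range k, ((s : ℂ) * a (k-i)) * z^(i+1)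
      = ∑ i ∈ Finset.range k, ((s:ℂ) * a (i+1)) * z^(k-i) := by
    rw [← Finset.sum_range_reflect]
    refine Finset.sum_congr rfl fun i hi => ?_
    have hik : i < k := Finset.mem_range.mp hi
    have h1 : k - (k - 1 - i) = i + 1 := by omega
    have h2 : k - 1 - i + 1 = k - i := by omega
    rw [h1, h2]
  have hsz : ∀ i, i < k → (s:ℂ) * z * ((a (i+1) :ℂ) * z^(k-(i+1))) = ((s:ℂ) * a (i+1)) * z^(k-i) := by
    intro i hik
    have : k - i = (k - (i+1)) + 1 := by omega
    rw [this, pow_succ]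
    ring
  rw [sub_sub, mul_sub]
  rw [Finset.mul_sum]
  rw [Finset.sum_congr rfl (fun i hi => hsz i (Finset.mem_range.mp hi)), ← hrefl]
  simp only [sub_mul]
  rw [Finset.sum_sub_distrib, pow_succ]
  ring

lemma Rpoly_step {a b : ℕ → ℝ} {s : ℝ} {k : ℕ}
    (hb : ∀ i, 1 ≤ i → i ≤ k → b i = a i - s * a (k+1-i)) (hbk : b (k+1) = s) (z : ℂ) :
    Rpoly b (k+1) z = z * Rpoly a k z - s * Epoly a k z := by
  unfold Epoly Rpoly
  rw [Finset.sum_range_succ, hbk]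
  have hsum : ∑ i ∈ Finset.range k, (b (i+1) : ℂ) * z^(k+1-(i+1))
      = ∑ i ∈ Finset.range k, ((a (i+1) : ℂ) - s * a (k-i)) * z^(k-i) := by
    refine Finset.sum_congr rfl fun i hi => ?_
    have hik : i < k := Finset.mem_range.mp hi
    rw [hb (i+1) (by omega) (by omega)]
    have h1 : k + 1 - (i+1) = k - i := by omega
    rw [h1]
    push_cast
    ring
  rw [hsum]
  have hrefl : ∑ i ∈ Finset.range k, ((s:ℂ) * a (k-i)) * z^(k-i)
      = ∑ i ∈ Finset.range k, ((s:ℂ) * a (i+1)) * z^(i+1) := by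
    rw [← Finset.sum_range_reflect]
    refine Finset.sum_congr rfl fun i hi => ?_
    have hik : i < k := Finset.mem_range.mp hi
    have h1 : k - (k - 1 - i) = i + 1 := by omega
    rw [h1]
  have hz : ∀ i, i < k → z * ((a (i+1) : ℂ) * z^(k-(i+1))) = (a (i+1) : ℂ) * z^(k-i) := by
    intro i hik
    have : k - i = (k - (i+1)) + 1 := by omega
    rw [this, pow_succ]
    ring
  simp only [sub_mul]
  rw [Finset.sum_sub_distrib, hrefl, mul_sub, mul_sub, Finset.mul_sum, Finset.mul_sum,
    Finset.sum_congr rfl (fun i hi => hz i (Finset.mem_range.mp hi)), pow_succ]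
  have : ∀ i ∈ Finset.range k, (s:ℂ) * ((a (i+1):ℂ) * z^(i+1)) = ((s:ℂ) * a (i+1)) * z^(i+1) :=
    fun i _ => by ring
  rw [Finset.sum_congr rfl this]
  simp only [show k + 1 - (k+1) = 0 from by omega, show 1 + k - (1+k) = 0 from by omega, pow_zero]
  ring
lemma multiset_one_le_prod (t : Multiset ℝ) (h : ∀ x ∈ t, (1:ℝ) ≤ x) : 1 ≤ t.prod := by
  induction t using Multiset.induction_on with
  | empty => simp
  | cons a s ih =>
    rw [Multiset.prod_cons]
    have ha := h a (Multiset.mem_cons_self a s)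
    have hs := ih (fun x hx => h x (Multiset.mem_cons_of_mem hx))
    nlinarith

open Polynomial in
lemma abs_diag_lt_one {a : ℕ → ℝ} {k : ℕ} (hk : 1 ≤ k)
    (h : ∀ z : ℂ, ‖z‖ ≤ 1 → Epoly a k z ≠ 0) : |a k| < 1 := by
  by_cases hak : a k = 0
  · rw [hak]; norm_num
  set P : ℂ[X] := C 1 - ∑ i ∈ Finset.range k, C ((a (i+1) : ℂ)) * X^(i+1) with hP
  have heval : ∀ z : ℂ, P.eval z = Epoly a k z := by
    intro z
    simp [hP, Epoly, eval_finset_sum]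
  have hcoeff : P.coeff k = -(a k : ℂ) := by
    rw [hP, coeff_sub, coeff_C, if_neg (by omega), finset_sum_coeff]
    have : ∀ i ∈ Finset.range k, (C ((a (i+1):ℂ)) * X^(i+1)).coeff k
        = if i = k - 1 then (a k : ℂ) else 0 := by
      intro i hi
      rw [coeff_C_mul, coeff_X_pow]
      rcases eq_or_ne i (k-1) with h | h
      · simp [h, Nat.sub_add_cancel hk]
      · rw [if_neg (by omega), if_neg h, mul_zero]
    rw [Finset.sum_congr rfl this, Finset.sum_ite_eq' _ (k-1), if_pos (by simp; omega)]
    ring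
  have hPne : P ≠ 0 := fun h0 => by
    rw [h0] at hcoeff; simp at hcoeff; exact hak hcoeff
  have hdegle : P.natDegree ≤ k := by
    apply natDegree_le_iff_degree_le.mpr
    apply le_trans (degree_sub_le _ _)
    apply max_le
    · exact le_trans degree_C_le (by exact_mod_cast Nat.cast_nonneg' k)
    · apply le_trans (degree_sum_le _ _)
      apply Finset.sup_le
      intro i hi
      apply le_trans (degree_C_mul_X_pow_le (i+1) _)
      exact_mod_cast Nat.add_one_le_iff.mpr (Finset.mem_range.mp hi)
  have hdeg : P.natDegree = k := le_antisymm hdegle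
    (le_natDegree_of_ne_zero (by rw [hcoeff]; simpa using hak))
  have hsplit : P.Splits := IsAlgClosed.splits P
  have hcard : Multiset.card P.roots = k := by
    rw [splits_iff_card_roots.mp hsplit, hdeg]
  have hroots : ∀ r ∈ P.roots, 1 < ‖r‖ := by
    intro r hr
    by_contra hle
    exact h r (le_of_not_gt hle) (by rw [← heval r]; exact (mem_roots hPne).mp hr)
  have hfac := hsplit.eq_prod_roots
  have heval0 : P.eval 0 = 1 := by rw [heval, Epoly]; simp
  have hlead : P.leadingCoeff = -(a k : ℂ) := by
    rw [leadingCoeff, hdeg, hcoeff]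
  have hprodval : (1:ℂ) = -(a k : ℂ) * (P.roots.map (fun r => -r)).prod := by
    calc (1:ℂ) = P.eval 0 := heval0.symm
      _ = (C P.leadingCoeff * (P.roots.map fun r => X - C r).prod).eval 0 := by rw [← hfac]
      _ = P.leadingCoeff * ((P.roots.map fun r => X - C r).map (fun p => p.eval 0)).prod := by
          rw [eval_mul, eval_C, eval_multiset_prod]
      _ = -(a k : ℂ) * (P.roots.map (fun r => -r)).prod := by
          rw [hlead, Multiset.map_map]
          congr 2
          apply Multiset.map_congr rfl
          intro r _
          simp
  have hnorm : (1:ℝ) = |a k| * (P.roots.map (fun r => ‖r‖)).prod := by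
    have := congrArg (normHom : ℂ →*₀ ℝ) hprodval
    rw [map_one, map_mul, map_multiset_prod, Multiset.map_map] at this
    rw [this]
    congr 1
    · simp
    · congr 1
      apply Multiset.map_congr rfl
      intro r _
      simp
  have hprod_gt : 1 < (P.roots.map (fun r => ‖r‖)).prod := by
    have hne : P.roots ≠ 0 := by
      intro h0; rw [h0] at hcard; simp at hcard; omega
    obtain ⟨r, hr⟩ := Multiset.exists_mem_of_ne_zero hne
    obtain ⟨t, ht⟩ := Multiset.exists_cons_of_mem hr
    rw [ht, Multiset.map_cons, Multiset.prod_cons]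
    have h1 : 1 < ‖r‖ := hroots r hr
    have h2 : 1 ≤ (t.map (fun r => ‖r‖)).prod := by
      refine multiset_one_le_prod _ (fun x hx => ?_)
      obtain ⟨s, hs, rfl⟩ := Multiset.mem_map.mp hx
      exact le_of_lt (hroots s (by rw [ht]; exact Multiset.mem_cons_of_mem hs))
    calc (1:ℝ) < ‖r‖ := h1
      _ = ‖r‖ * 1 := (mul_one _).symm
      _ ≤ ‖r‖ * (t.map (fun r => ‖r‖)).prod := by
          apply mul_le_mul_of_nonneg_left h2 (le_of_lt (lt_trans one_pos h1))
  nlinarith [abs_nonneg (a k)]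
def NV (a : ℕ → ℝ) (k : ℕ) : Prop := ∀ z : ℂ, ‖z‖ ≤ 1 → Epoly a k z ≠ 0

lemma norm_Rpoly_le {a : ℕ → ℝ} {k : ℕ} (h : NV a k) {z : ℂ} (hz : ‖z‖ ≤ 1) :
    ‖Rpoly a k z‖ ≤ ‖Epoly a k z‖ := by
  have hball : z ∈ closure (Metric.ball (0:ℂ) 1) := by
    rw [closure_ball (0:ℂ) one_ne_zero]
    simpa [Metric.mem_closedBall, dist_eq_norm] using hz
  have hE : ∀ w : ℂ, w ∈ Metric.closedBall (0:ℂ) 1 → Epoly a k w ≠ 0 := by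
    intro w hw
    exact h w (by simpa [Metric.mem_closedBall, dist_eq_norm] using hw)
  have hd : DiffContOnCl ℂ (fun w => Rpoly a k w / Epoly a k w) (Metric.ball 0 1) := by
    have : DifferentiableOn ℂ (fun w => Rpoly a k w / Epoly a k w)
        (Metric.closedBall (0:ℂ) 1) := by
      apply DifferentiableOn.div
      · exact (differentiable_Rpoly a k).differentiableOn
      · exact (differentiable_Epoly a k).differentiableOn
      · exact hE
    refine DiffContOnCl.mk ?_ ?_
    · exact this.mono Metric.ball_subset_closedBall
    · rw [closure_ball (0:ℂ) one_ne_zero]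
      exact this.continuousOn
  have hfr : ∀ w ∈ frontier (Metric.ball (0:ℂ) 1),
      ‖Rpoly a k w / Epoly a k w‖ ≤ 1 := by
    intro w hw
    rw [frontier_ball (0:ℂ) one_ne_zero] at hw
    have hw1 : ‖w‖ = 1 := by simpa [mem_sphere_iff_norm] using hw
    rw [norm_div, norm_Rpoly_eq a k hw1]
    have : Epoly a k w ≠ 0 := hE w (by simp [Metric.mem_closedBall, dist_eq_norm, hw1])
    exact le_of_eq (div_self (norm_ne_zero_iff.mpr this))
  have := Complex.norm_le_of_forall_mem_frontier_norm_le Metric.isBounded_ball hd hfr hball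
  rw [norm_div] at this
  have hEz : Epoly a k z ≠ 0 := h z hz
  have hpos : (0:ℝ) < ‖Epoly a k z‖ := norm_pos_iff.mpr hEz
  have := (div_le_one hpos).mp this
  linarith

lemma fwd_step {a b : ℕ → ℝ} {s : ℝ} {k : ℕ} (hNV : NV a k) (hs : |s| < 1)
    (hb : ∀ i, 1 ≤ i → i ≤ k → b i = a i - s * a (k+1-i)) (hbk : b (k+1) = s) :
    NV b (k+1) := by
  intro z hz h0
  rw [Epoly_step hb hbk z, sub_eq_zero] at h0
  have h1 := norm_Rpoly_le hNV hz
  have h2 : (0:ℝ) < ‖Epoly a k z‖ := norm_pos_iff.mpr (hNV z hz)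
  have h3 : ‖Epoly a k z‖ ≤ |s| * ‖Rpoly a k z‖ := by
    calc ‖Epoly a k z‖ = ‖(s:ℂ) * z * Rpoly a k z‖ := by rw [h0]
      _ = |s| * ‖z‖ * ‖Rpoly a k z‖ := by
          rw [norm_mul, norm_mul, Complex.norm_real, Real.norm_eq_abs]
      _ ≤ |s| * 1 * ‖Rpoly a k z‖ := by
          have := mul_le_mul_of_nonneg_left hz (abs_nonneg s)
          exact mul_le_mul_of_nonneg_right (by linarith) (norm_nonneg _)
      _ = |s| * ‖Rpoly a k z‖ := by ring
  nlinarith [norm_nonneg (Rpoly a k z), abs_nonneg s]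

lemma bwd_step {b : ℕ → ℝ} {m : ℕ} (a : ℕ → ℝ) (hNV : NV b (m+1))
    (ha : ∀ i, 1 ≤ i → i ≤ m →
      a i = (b i + b (m+1) * b (m+1-i)) / (1 - (b (m+1))^2)) :
    NV a m := by
  set s := b (m+1) with hsdef
  have hs : |s| < 1 := abs_diag_lt_one (by omega) hNV
  have hden : (1:ℝ) - s^2 ≠ 0 := by nlinarith [abs_nonneg s, sq_abs s]
  have hb : ∀ i, 1 ≤ i → i ≤ m → b i = a i - s * a (m+1-i) := by
    intro i h1 h2
    have e1 := ha i h1 h2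
    have e2 := ha (m+1-i) (by omega) (by omega)
    have h3 : m + 1 - (m+1-i) = i := by omega
    rw [h3] at e2
    field_simp at e1 e2
    apply mul_right_cancel₀ hden
    linear_combination s * e2 - e1
  have key : ∀ z : ℂ, (1 - (s:ℂ)^2) * Epoly a m z
      = Epoly b (m+1) z + s * Rpoly b (m+1) z := by
    intro z
    rw [Epoly_step hb rfl z, Rpoly_step hb rfl z]
    ring
  intro z hz h0
  have h1 : Epoly b (m+1) z = -(s:ℂ) * Rpoly b (m+1) z := by
    have := key z
    rw [h0, mul_zero] at this
    linear_combination -this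
  have h2 := norm_Rpoly_le hNV hz
  have h3 : (0:ℝ) < ‖Epoly b (m+1) z‖ := norm_pos_iff.mpr (hNV z hz)
  have h4 : ‖Epoly b (m+1) z‖ = |s| * ‖Rpoly b (m+1) z‖ := by
    rw [h1]
    simp [norm_mul, Complex.norm_real, Real.norm_eq_abs]
  nlinarith [norm_nonneg (Rpoly b (m+1) z), abs_nonneg s]

lemma NV_zero (a : ℕ → ℝ) : NV a 0 := by
  intro z _
  simp [Epoly]

lemma fwdRow_diag (ζ : ℕ → ℝ) (k : ℕ) : fwdRow ζ (k+1) (k+1) = ζ (k+1) := by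
  simp [fwdRow]

lemma fwdRow_lt (ζ : ℕ → ℝ) {k i : ℕ} (h2 : i ≤ k) :
    fwdRow ζ (k+1) i = fwdRow ζ k i - ζ (k+1) * fwdRow ζ k (k+1-i) := by
  simp only [fwdRow]
  rw [if_neg (by omega)]

lemma NV_fwdRow (ζ' : ℕ → ℝ) (k : ℕ) (h : ∀ i, 1 ≤ i → i ≤ k → |ζ' i| < 1) :
    NV (fwdRow ζ' k) k := by
  induction k with
  | zero => exact NV_zero _
  | succ k ih =>
    exact fwd_step (ih fun i h1 h2 => h i h1 (by omega)) (h (k+1) (by omega) le_rfl)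
      (fun i h1 h2 => fwdRow_lt ζ' h2) (fwdRow_diag ζ' k)

lemma toSeq_eq {q : ℕ} (v : Fin q → ℝ) {n : ℕ} (h1 : 1 ≤ n) (h2 : n ≤ q) :
    toSeq v n = v ⟨n-1, by omega⟩ := by
  rw [toSeq, dif_pos (by omega)]

lemma mem_invRegion_iff {q : ℕ} (θ : Fin q → ℝ) :
    θ ∈ invRegion q ↔ NV (toSeq θ) q := by
  have hE : ∀ z : ℂ, Epoly (toSeq θ) q z = 1 - ∑ i : Fin q, (θ i : ℂ) * z ^ (i.1+1) := by
    intro z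
    rw [Epoly]
    congr 1
    rw [← Fin.sum_univ_eq_sum_range (fun i => ((toSeq θ (i+1) : ℝ) : ℂ) * z^(i+1)) q]
    refine Finset.sum_congr rfl fun i _ => ?_
    rw [toSeq_eq θ (by omega) (by omega)]
    congr 2
  constructor
  · intro hθ z hz h0
    rw [hE z] at h0
    have := hθ z h0
    linarith
  · intro hNV z h0
    by_contra hle
    exact hNV z (le_of_not_gt hle) (by rw [hE z]; exact h0)

open Classical in
lemma invAux_succ_fst (q : ℕ) (θs : ℕ → ℝ) (d : ℕ) (hc : (invAux q θs d).2) (i : ℕ) :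
    (invAux q θs (d+1)).1 i = ((invAux q θs d).1 i
      + (invAux q θs d).1 (q-d) * (invAux q θs d).1 (q-d-i))
      / (1 - ((invAux q θs d).1 (q-d))^2) := by
  have h : (invAux q θs (d+1)).1 i = if h : (invAux q θs d).2 then
      ((invAux q θs d).1 i + (invAux q θs d).1 (q-d) * (invAux q θs d).1 (q-d-i))
      / (1 - ((invAux q θs d).1 (q-d))^2) else 0 := by
    simp only [invAux]
    by_cases hp : (invAux q θs d).2 <;> simp [hp]
  rw [h, dif_pos hc]

lemma invAux_succ_snd (q : ℕ) (θs : ℕ → ℝ) (d : ℕ) :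
    (invAux q θs (d+1)).2
      = ((invAux q θs d).2 ∧ |(invAux q θs (d+1)).1 (q-d-1)| < 1) := rfl

lemma invAux_good {q : ℕ} (hq : 1 ≤ q) {θs : ℕ → ℝ} (h : NV θs q) :
    ∀ d, d ≤ q - 1 → (invAux q θs d).2 ∧ NV (invAux q θs d).1 (q-d)
      ∧ |(invAux q θs d).1 (q-d)| < 1 := by
  intro d
  induction d with
  | zero =>
    intro _
    have hd : |θs q| < 1 := abs_diag_lt_one hq h
    exact ⟨hd, by simpa [invAux] using h, by simpa [invAux] using hd⟩
  | succ d ih =>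
    intro hd1
    obtain ⟨hc, hNV, hdiag⟩ := ih (by omega)
    have hm : q - d = (q - (d+1)) + 1 := by omega
    set m := q - (d+1) with hmdef
    have hm1 : 1 ≤ m := by omega
    have hNVrow : NV (invAux q θs (d+1)).1 m := by
      apply bwd_step (b := (invAux q θs d).1) _ (by rw [← hm]; exact hNV)
      intro i h1 h2
      rw [invAux_succ_fst q θs d hc i, ← hm]
    have hdiag2 : |(invAux q θs (d+1)).1 m| < 1 := abs_diag_lt_one hm1 hNVrow
    have hc2 : (invAux q θs (d+1)).2 := by
      rw [invAux_succ_snd]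
      exact ⟨hc, by rw [show q - d - 1 = m by omega]; exact hdiag2⟩
    exact ⟨hc2, hNVrow, hdiag2⟩

theorem binv_mem_cube {q : ℕ} (hq : 1 ≤ q) {θ : Fin q → ℝ} (hθ : θ ∈ invRegion q) :
    Binv θ ∈ openCube q := by
  intro i
  have hg := (invAux_good hq ((mem_invRegion_iff θ).mp hθ) (q - (i.1+1)) (by omega)).2.2
  rw [show q - (q - (i.1+1)) = i.1 + 1 by omega] at hg
  rw [Set.mem_Ioo, ← abs_lt]
  exact hg

theorem bmap_binv {q : ℕ} (hq : 1 ≤ q) {θ : Fin q → ℝ} (hθ : θ ∈ invRegion q) :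
    Bmap (Binv θ) = θ := by
  set θs := toSeq θ with hθs
  set ζ' := toSeq (Binv θ) with hζ'def
  have hgood := invAux_good hq ((mem_invRegion_iff θ).mp hθ)
  have hζ' : ∀ k, 1 ≤ k → k ≤ q → ζ' k = (invAux q θs (q-k)).1 k := by
    intro k h1 h2
    rw [hζ'def, toSeq_eq _ h1 h2]
    show (invAux q θs (q - ((k-1) + 1))).1 ((k-1) + 1) = _
    rw [show k - 1 + 1 = k by omega]
  have main : ∀ k, 1 ≤ k → k ≤ q → ∀ i, 1 ≤ i → i ≤ k →
      fwdRow ζ' k i = (invAux q θs (q-k)).1 i := by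
    intro k h1
    induction k, h1 using Nat.le_induction with
    | base =>
      intro hq1 i hi1 hi2
      have : i = 1 := by omega
      subst this
      rw [show (1:ℕ) = 0 + 1 from rfl, fwdRow_diag]
      exact hζ' 1 (by omega) hq1
    | succ k hk ih =>
      intro hk1 i hi1 hi2
      have hkq : k ≤ q := by omega
      rcases eq_or_ne i (k+1) with rfl | hne
      · rw [fwdRow_diag]
        exact hζ' (k+1) (by omega) hk1
      · have hik : i ≤ k := by omega
        set d := q - (k+1) with hd
        have hdq : d ≤ q - 1 := by omega
        obtain ⟨hc, _, hdiag⟩ := hgood d hdq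
        have hqd : q - d = k + 1 := by omega
        have hstep := invAux_succ_fst q θs d hc
        have hd1 : d + 1 = q - k := by omega
        set s := (invAux q θs d).1 (k+1) with hs
        have hsabs : |s| < 1 := by rw [hs, ← hqd]; exact hdiag
        have hden : (1:ℝ) - s^2 ≠ 0 := by nlinarith [abs_nonneg s, sq_abs s]
        have e1 : (invAux q θs (q-k)).1 i
            = ((invAux q θs d).1 i + s * (invAux q θs d).1 (k+1-i)) / (1 - s^2) := by
          rw [← hd1, hstep i, hqd]
        have e2 : (invAux q θs (q-k)).1 (k+1-i)
            = ((invAux q θs d).1 (k+1-i) + s * (invAux q θs d).1 i) / (1 - s^2) := by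
          rw [← hd1, hstep (k+1-i), hqd, show k + 1 - (k+1-i) = i by omega]
        have hζk1 : ζ' (k+1) = s := hζ' (k+1) (by omega) hk1
        rw [fwdRow_lt ζ' hik, ih hkq i hi1 hik, ih hkq (k+1-i) (by omega) (by omega),
          hζk1, e1, e2]
        field_simp
        try ring
  funext j
  show fwdRow ζ' q (j.1+1) = θ j
  rw [main q hq le_rfl (j.1+1) (by omega) (by omega), Nat.sub_self]
  show θs (j.1+1) = θ j
  rw [hθs, toSeq_eq θ (by omega) (by omega)]
  exact congrArg θ (Fin.ext (by simp))

theorem binv_bmap {q : ℕ} (hq : 1 ≤ q) {ζ : Fin q → ℝ} (hζ : ζ ∈ openCube q) :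
    Binv (Bmap ζ) = ζ := by
  set ζ' := toSeq ζ with hζ'def
  have hζ' : ∀ i, 1 ≤ i → i ≤ q → |ζ' i| < 1 := by
    intro i h1 h2
    rw [hζ'def, toSeq_eq _ h1 h2, abs_lt]
    exact Set.mem_Ioo.mp (hζ _)
  set θs := toSeq (Bmap ζ) with hθsdef
  have hθs : ∀ n, 1 ≤ n → n ≤ q → θs n = fwdRow ζ' q n := by
    intro n h1 h2
    rw [hθsdef, toSeq_eq _ h1 h2]
    show fwdRow ζ' q ((n-1) + 1) = _
    rw [show n - 1 + 1 = n by omega]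
  have claim : ∀ d, d ≤ q - 1 → (invAux q θs d).2
      ∧ ∀ i, 1 ≤ i → i ≤ q - d → (invAux q θs d).1 i = fwdRow ζ' (q-d) i := by
    intro d
    induction d with
    | zero =>
      intro _
      have hqq : q = (q - 1) + 1 := by omega
      have hq2 : |θs q| < 1 := by
        rw [hθs q hq le_rfl, hqq, fwdRow_diag, ← hqq]
        exact hζ' q hq le_rfl
      exact ⟨hq2, fun i h1 h2 => by simpa [invAux] using hθs i h1 (by omega)⟩
    | succ d ih =>
      intro hd1
      obtain ⟨hc, hrows⟩ := ih (by omega)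
      set k := q - (d+1) with hk
      have hk1 : 1 ≤ k := by omega
      have hqd : q - d = k + 1 := by omega
      set s := ζ' (k+1) with hs
      have hsabs : |s| < 1 := hζ' (k+1) (by omega) (by omega)
      have hden : (1:ℝ) - s^2 ≠ 0 := by nlinarith [abs_nonneg s, sq_abs s]
      have hrows' : ∀ i, 1 ≤ i → i ≤ k+1 → (invAux q θs d).1 i = fwdRow ζ' (k+1) i := by
        intro i h1 h2
        rw [hrows i h1 (by omega), hqd]
      have hdiag : (invAux q θs d).1 (q-d) = s := by
        rw [hqd, hrows' (k+1) (by omega) le_rfl, fwdRow_diag]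
      have hstep := invAux_succ_fst q θs d hc
      have hval : ∀ i, 1 ≤ i → i ≤ k → (invAux q θs (d+1)).1 i = fwdRow ζ' k i := by
        intro i h1 h2
        rw [hstep i, hdiag, hqd,
          hrows' i (by omega) (by omega), hrows' (k+1-i) (by omega) (by omega),
          fwdRow_lt ζ' (show i ≤ k by omega), fwdRow_lt ζ' (show k+1-i ≤ k by omega),
          show k + 1 - (k+1-i) = i by omega, ← hs]
        field_simp
        try ring
      have hdiag2 : |(invAux q θs (d+1)).1 (q - d - 1)| < 1 := by
        rw [show q - d - 1 = k by omega, hval k hk1 le_rfl]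
        have hkk : k = (k-1) + 1 := by omega
        rw [hkk, fwdRow_diag, ← hkk]
        exact hζ' k (by omega) (by omega)
      refine ⟨by rw [invAux_succ_snd]; exact ⟨hc, hdiag2⟩, fun i h1 h2 => hval i h1 h2⟩
  funext j
  show (invAux q θs (q - (j.1+1))).1 (j.1+1) = ζ j
  have hd : q - (j.1+1) ≤ q - 1 := by omega
  rw [(claim _ hd).2 (j.1+1) (by omega) (by omega),
    show q - (q - (j.1+1)) = j.1 + 1 by omega, fwdRow_diag]
  rw [hζ'def, toSeq_eq _ (by omega) (by omega)]
  exact congrArg ζ (Fin.ext (by simp))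

theorem bmap_mapsTo {q : ℕ} {ζ : Fin q → ℝ} (hζ : ζ ∈ openCube q) :
    Bmap ζ ∈ invRegion q := by
  rw [mem_invRegion_iff]
  intro z hz
  have hζ' : ∀ i, 1 ≤ i → i ≤ q → |toSeq ζ i| < 1 := by
    intro i h1 h2
    rw [toSeq_eq _ h1 h2, abs_lt]
    exact Set.mem_Ioo.mp (hζ _)
  have hNV := NV_fwdRow (toSeq ζ) q hζ' z hz
  rw [Epoly_congr (a := toSeq (Bmap ζ)) (b := fwdRow (toSeq ζ) q) ?_ z]
  · exact hNV
  · intro i h1 h2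
    rw [toSeq_eq _ h1 h2]
    show fwdRow (toSeq ζ) q ((i-1) + 1) = _
    rw [show i - 1 + 1 = i by omega]

/-- For `q ≥ 1`, `B` restricted to the open unit cube `(-1,1)^q` is a bijection onto the
invertible region `D_θ`. -/
theorem bijOn_openCube {q : ℕ} (hq : 1 ≤ q) :
    Set.BijOn Bmap (openCube q) (invRegion q) := by
  refine ⟨fun ζ hζ => bmap_mapsTo hζ, ?_, ?_⟩
  · intro x hx y hy hxy
    rw [← binv_bmap hq hx, ← binv_bmap hq hy, hxy]
  · intro θ hθ
    exact ⟨Binv θ, binv_mem_cube hq hθ, bmap_binv hq hθ⟩
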